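/- arXiv:1204.0683 — 5 statements merged into one kernel-verified Lean document; each statement's English description precedes it below -/
import Mathlib

section
/- Let n be a positive integer, let t be an n×n real matrix, and let W : ℝⁿ → Mat(n,n;ℝ) be a differentiable matrix-valued map such that W(q) is symmetric for every q and the Killing (equivariance) condition DW(q)[t q] = t·W(q) + W(q)·tᵀ holds for all q ∈ ℝⁿ, where DW(q)[v] denotes the Fréchet derivative of W at q in direction v. Define H(q,p) = ⟪p, W(q) p⟫ and Φ(q,p) = ⟪p, t q⟫. Then the canonical Poisson bracket {H, Φ} vanishes identically on ℝⁿ × ℝⁿ. -/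
open Matrix BigOperators

attribute [local instance] Matrix.normedAddCommGroup Matrix.normedSpace

/-- The canonical Poisson bracket of two phase-space functions on ℝⁿ × ℝⁿ:
`{f,g}(q,p) = Σ_i ∂f/∂qⁱ ∂g/∂p_i − ∂f/∂p_i ∂g/∂qⁱ`. -/
noncomputable def poissonBracket (n : ℕ)
    (f g : (Fin n → ℝ) × (Fin n → ℝ) → ℝ) :
    (Fin n → ℝ) × (Fin n → ℝ) → ℝ :=
  fun x => ∑ i : Fin n,
    (fderiv ℝ f x (Pi.single i 1, 0) * fderiv ℝ g x (0, Pi.single i 1)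
      - fderiv ℝ f x (0, Pi.single i 1) * fderiv ℝ g x (Pi.single i 1, 0))

noncomputable def entryCLM (n : ℕ) (i j : Fin n) :
    Matrix (Fin n) (Fin n) ℝ →L[ℝ] ℝ :=
  LinearMap.toContinuousLinearMap
    { toFun := fun A => A i j
      map_add' := fun _ _ => rfl
      map_smul' := fun _ _ => rfl }

@[simp] lemma entryCLM_apply (n : ℕ) (i j : Fin n) (A : Matrix (Fin n) (Fin n) ℝ) :
    entryCLM n i j A = A i j := rfl

lemma fderiv_phi {n : ℕ} (t : Matrix (Fin n) (Fin n) ℝ) (q p u v : Fin n → ℝ) :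
    fderiv ℝ (fun x : (Fin n → ℝ) × (Fin n → ℝ) => x.2 ⬝ᵥ t.mulVec x.1) (q, p) (u, v)
      = v ⬝ᵥ t.mulVec q + p ⬝ᵥ t.mulVec u := by
  have h : HasFDerivAt (fun x : (Fin n → ℝ) × (Fin n → ℝ) => x.2 ⬝ᵥ t.mulVec x.1)
      (∑ i : Fin n, ∑ j : Fin n,
        t i j • (p i • ((ContinuousLinearMap.proj j).comp
            (ContinuousLinearMap.fst ℝ (Fin n → ℝ) (Fin n → ℝ)))
          + q j • ((ContinuousLinearMap.proj i).comp
            (ContinuousLinearMap.snd ℝ (Fin n → ℝ) (Fin n → ℝ))))) (q, p) := by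
    have heq : (fun x : (Fin n → ℝ) × (Fin n → ℝ) => x.2 ⬝ᵥ t.mulVec x.1)
        = fun x => ∑ i : Fin n, ∑ j : Fin n, t i j * (x.2 i * x.1 j) := by
      funext x
      simp only [dotProduct, mulVec, Finset.mul_sum]
      exact Finset.sum_congr rfl fun i _ => Finset.sum_congr rfl fun j _ => by ring
    rw [heq]
    refine HasFDerivAt.fun_sum fun i _ => HasFDerivAt.fun_sum fun j _ => ?_
    have h1 : HasFDerivAt (fun x : (Fin n → ℝ) × (Fin n → ℝ) => x.2 i)
        ((ContinuousLinearMap.proj i).comp (ContinuousLinearMap.snd ℝ (Fin n → ℝ) (Fin n → ℝ)))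
        (q, p) :=
      ((ContinuousLinearMap.proj i).comp (ContinuousLinearMap.snd ℝ (Fin n → ℝ) (Fin n → ℝ))).hasFDerivAt
    have h2 : HasFDerivAt (fun x : (Fin n → ℝ) × (Fin n → ℝ) => x.1 j)
        ((ContinuousLinearMap.proj j).comp (ContinuousLinearMap.fst ℝ (Fin n → ℝ) (Fin n → ℝ)))
        (q, p) :=
      ((ContinuousLinearMap.proj j).comp (ContinuousLinearMap.fst ℝ (Fin n → ℝ) (Fin n → ℝ))).hasFDerivAt
    exact (h1.mul h2).const_mul (t i j)
  rw [h.fderiv]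
  simp only [ContinuousLinearMap.coe_sum', Finset.sum_apply, ContinuousLinearMap.add_apply,
    ContinuousLinearMap.smul_apply, ContinuousLinearMap.comp_apply,
    ContinuousLinearMap.coe_fst', ContinuousLinearMap.coe_snd', ContinuousLinearMap.proj_apply,
    smul_eq_mul, dotProduct, mulVec, Finset.mul_sum, Finset.sum_add_distrib]
  rw [← Finset.sum_add_distrib]
  refine Finset.sum_congr rfl fun i _ => ?_
  rw [← Finset.sum_add_distrib]
  exact Finset.sum_congr rfl fun j _ => by ring


lemma fderiv_H {n : ℕ} (W : (Fin n → ℝ) → Matrix (Fin n) (Fin n) ℝ)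
    (hWdiff : Differentiable ℝ W) (q p u v : Fin n → ℝ) :
    fderiv ℝ (fun x : (Fin n → ℝ) × (Fin n → ℝ) => x.2 ⬝ᵥ (W x.1).mulVec x.2) (q, p) (u, v)
      = v ⬝ᵥ (W q).mulVec p + p ⬝ᵥ (fderiv ℝ W q u).mulVec p + p ⬝ᵥ (W q).mulVec v := by
  have hW : HasFDerivAt W (fderiv ℝ W q) q := (hWdiff q).hasFDerivAt
  have hWfst : HasFDerivAt (fun x : (Fin n → ℝ) × (Fin n → ℝ) => W x.1)
      ((fderiv ℝ W q).comp (ContinuousLinearMap.fst ℝ (Fin n → ℝ) (Fin n → ℝ))) (q, p) :=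
    hW.comp (q, p) hasFDerivAt_fst
  have h : HasFDerivAt (fun x : (Fin n → ℝ) × (Fin n → ℝ) => x.2 ⬝ᵥ (W x.1).mulVec x.2)
      (∑ i : Fin n, ∑ j : Fin n,
        (p i • (W q i j • ((ContinuousLinearMap.proj j).comp
              (ContinuousLinearMap.snd ℝ (Fin n → ℝ) (Fin n → ℝ)))
            + p j • ((entryCLM n i j).comp ((fderiv ℝ W q).comp
              (ContinuousLinearMap.fst ℝ (Fin n → ℝ) (Fin n → ℝ)))))
          + (W q i j * p j) • ((ContinuousLinearMap.proj i).comp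
              (ContinuousLinearMap.snd ℝ (Fin n → ℝ) (Fin n → ℝ))))) (q, p) := by
    have heq : (fun x : (Fin n → ℝ) × (Fin n → ℝ) => x.2 ⬝ᵥ (W x.1).mulVec x.2)
        = fun x => ∑ i : Fin n, ∑ j : Fin n, x.2 i * (W x.1 i j * x.2 j) := by
      funext x
      simp only [dotProduct, mulVec, Finset.mul_sum]
    rw [heq]
    refine HasFDerivAt.fun_sum fun i _ => HasFDerivAt.fun_sum fun j _ => ?_
    have h1 : HasFDerivAt (fun x : (Fin n → ℝ) × (Fin n → ℝ) => x.2 i)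
        ((ContinuousLinearMap.proj i).comp (ContinuousLinearMap.snd ℝ (Fin n → ℝ) (Fin n → ℝ)))
        (q, p) :=
      ((ContinuousLinearMap.proj i).comp (ContinuousLinearMap.snd ℝ (Fin n → ℝ) (Fin n → ℝ))).hasFDerivAt
    have h3 : HasFDerivAt (fun x : (Fin n → ℝ) × (Fin n → ℝ) => x.2 j)
        ((ContinuousLinearMap.proj j).comp (ContinuousLinearMap.snd ℝ (Fin n → ℝ) (Fin n → ℝ)))
        (q, p) :=
      ((ContinuousLinearMap.proj j).comp (ContinuousLinearMap.snd ℝ (Fin n → ℝ) (Fin n → ℝ))).hasFDerivAt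
    have hA : HasFDerivAt (fun x : (Fin n → ℝ) × (Fin n → ℝ) => W x.1 i j)
        ((entryCLM n i j).comp ((fderiv ℝ W q).comp
          (ContinuousLinearMap.fst ℝ (Fin n → ℝ) (Fin n → ℝ)))) (q, p) :=
      (entryCLM n i j).hasFDerivAt.comp (q, p) hWfst
    exact h1.mul (hA.mul h3)
  rw [h.fderiv]
  simp only [ContinuousLinearMap.coe_sum', Finset.sum_apply, ContinuousLinearMap.add_apply,
    ContinuousLinearMap.smul_apply, ContinuousLinearMap.comp_apply,
    ContinuousLinearMap.coe_fst', ContinuousLinearMap.coe_snd', ContinuousLinearMap.proj_apply,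
    entryCLM_apply, smul_eq_mul, dotProduct, mulVec, Finset.mul_sum, Finset.sum_add_distrib]
  simp only [← Finset.sum_add_distrib]
  refine Finset.sum_congr rfl fun i _ => Finset.sum_congr rfl fun j _ => by ring

/-- If `W` is a differentiable symmetric-matrix valued map on ℝⁿ satisfying the
Killing (equivariance) condition `DW(q)[t q] = t·W(q) + W(q)·tᵀ`, then the quadratic
constraint `H(q,p) = ⟪p, W(q) p⟫` Poisson-commutes with the linear constraint
`Φ(q,p) = ⟪p, t q⟫`. -/
theorem quadratic_constraint_commutes_with_linear_constraint
    (n : ℕ) (hn : 0 < n)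
    (t : Matrix (Fin n) (Fin n) ℝ)
    (W : (Fin n → ℝ) → Matrix (Fin n) (Fin n) ℝ)
    (hWdiff : Differentiable ℝ W)
    (hWsymm : ∀ q, (W q).IsSymm)
    (hKilling : ∀ q : Fin n → ℝ, fderiv ℝ W q (t.mulVec q) = t * W q + W q * tᵀ) :
    poissonBracket n (fun x => x.2 ⬝ᵥ (W x.1).mulVec x.2)
        (fun x => x.2 ⬝ᵥ t.mulVec x.1)
      = fun _ => 0 := by
  funext x
  obtain ⟨q, p⟩ := x
  unfold poissonBracket
  simp only [fderiv_H W hWdiff, fderiv_phi]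
  simp only [dotProduct_zero, zero_dotProduct, Matrix.mulVec_zero, map_zero,
    Matrix.zero_mulVec, add_zero, zero_add]
  have hsingle : ∀ (M : Matrix (Fin n) (Fin n) ℝ) (k : Fin n),
      p ⬝ᵥ M.mulVec (Pi.single k 1) = (p ᵥ* M) k := by
    intro M k; rw [dotProduct_mulVec, dotProduct_single, mul_one]
  have hsingle2 : ∀ (w : Fin n → ℝ) (k : Fin n), Pi.single k 1 ⬝ᵥ w = w k := by
    intro w k; rw [single_dotProduct, one_mul]
  simp only [hsingle, hsingle2]
  have hsym : p ᵥ* W q = (W q).mulVec p := by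
    rw [← vecMul_transpose, (hWsymm q)]
  -- the scalar-valued linear functional M ↦ p ⬝ᵥ M *ᵥ p
  set φ : Matrix (Fin n) (Fin n) ℝ →ₗ[ℝ] ℝ :=
    { toFun := fun M => p ⬝ᵥ M.mulVec p
      map_add' := fun A B => by simp [Matrix.add_mulVec, dotProduct_add]
      map_smul' := fun c A => by
        simp [Matrix.smul_mulVec, dotProduct_smul] } with hφ
  set L : (Fin n → ℝ) →ₗ[ℝ] ℝ := φ.comp (fderiv ℝ W q).toLinearMap with hL
  have hLdef : ∀ w : Fin n → ℝ, p ⬝ᵥ (fderiv ℝ W q w).mulVec p = L w := fun w => rfl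
  have hq : t.mulVec q = ∑ k : Fin n, (t.mulVec q) k • (Pi.single k 1 : Fin n → ℝ) := by
    conv_lhs => rw [← Finset.univ_sum_single (t.mulVec q)]
    exact Finset.sum_congr rfl fun k _ => by
      funext m
      simp [Pi.single_apply, mul_ite, mul_one, mul_zero]
  have key : ∑ k : Fin n, (p ⬝ᵥ (fderiv ℝ W q (Pi.single k 1)).mulVec p) * (t.mulVec q) k
      = p ⬝ᵥ (fderiv ℝ W q (t.mulVec q)).mulVec p := by
    simp only [hLdef]
    conv_rhs => rw [hq, map_sum]
    simp only [_root_.map_smul, smul_eq_mul]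
    exact Finset.sum_congr rfl fun k _ => by ring
  rw [Finset.sum_sub_distrib, key, hKilling q, sub_eq_zero]
  rw [Matrix.add_mulVec, dotProduct_add, ← Matrix.mulVec_mulVec, ← Matrix.mulVec_mulVec]
  rw [dotProduct_mulVec p t, Matrix.mulVec_transpose, dotProduct_mulVec p (W q), hsym]
  simp only [dotProduct]
  rw [← Finset.sum_add_distrib]
  exact Finset.sum_congr rfl fun k _ => by ring
end

section
/- Let d and n be positive integers, k a nonzero real number, and q, π : Fin n → ℝ^d with q_I ≠ 0 and π_I ≠ 0 for all I. Then there exists φ : Fin n → ℝ with Σ_I φ_I = 0 such that the transformed constraints e^{−2φ_I} ‖π_I‖² − e^{2φ_I} |k| ‖q_I‖² = 0 hold for all I, if and only if ∏_{I} ‖π_I‖² = |k|^n ∏_{I} ‖q_I‖². Moreover, when it exists this φ is unique and is given explicitly by φ_I = (1/4) ln( ‖π_I‖² / (|k| ‖q_I‖²) ). -/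
open BigOperators

/-- Solvability of the transformed constraints of the particle toy model by a mean-free
scale parameter: there exists `φ` with `Σ φ_I = 0` and
`e^{−2φ_I}‖π_I‖² − e^{2φ_I}|k|‖q_I‖² = 0` for all `I` iff
`∏ ‖π_I‖² = |k|^n ∏ ‖q_I‖²`; moreover such a `φ` is unique, given by
`φ_I = (1/4) ln(‖π_I‖²/(|k|‖q_I‖²))`. -/
theorem transformed_constraints_solvable_iff_global_hamiltonian_vanishes
    (d n : ℕ) (hd : 0 < d) (hn : 0 < n) (k : ℝ) (hk : k ≠ 0)
    (q π : Fin n → EuclideanSpace ℝ (Fin d))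
    (hq : ∀ I, q I ≠ 0) (hπ : ∀ I, π I ≠ 0) :
    ((∃ φ : Fin n → ℝ, (∑ I, φ I = 0) ∧
        ∀ I, Real.exp (-(2 * φ I)) * ‖π I‖ ^ 2
              - Real.exp (2 * φ I) * (|k| * ‖q I‖ ^ 2) = 0) ↔
      (∏ I, ‖π I‖ ^ 2) = |k| ^ n * ∏ I, ‖q I‖ ^ 2)
    ∧ ∀ φ : Fin n → ℝ, (∑ I, φ I = 0) →
        (∀ I, Real.exp (-(2 * φ I)) * ‖π I‖ ^ 2
              - Real.exp (2 * φ I) * (|k| * ‖q I‖ ^ 2) = 0) →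
        φ = fun I => (1 / 4) * Real.log (‖π I‖ ^ 2 / (|k| * ‖q I‖ ^ 2)) := by
  have hA : ∀ I, (0:ℝ) < ‖π I‖ ^ 2 := fun I => pow_pos (norm_pos_iff.mpr (hπ I)) 2
  have hB : ∀ I, (0:ℝ) < |k| * ‖q I‖ ^ 2 :=
    fun I => mul_pos (abs_pos.mpr hk) (pow_pos (norm_pos_iff.mpr (hq I)) 2)
  -- constraint equivalence
  have key : ∀ (φ : ℝ) (I : Fin n),
      (Real.exp (-(2*φ)) * ‖π I‖^2 - Real.exp (2*φ) * (|k| * ‖q I‖^2) = 0) ↔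
      ‖π I‖^2 = Real.exp (4*φ) * (|k| * ‖q I‖^2) := by
    intro φ I
    rw [sub_eq_zero, Real.exp_neg]
    rw [inv_mul_eq_iff_eq_mul₀ (Real.exp_ne_zero _)]
    constructor
    · intro h
      rw [h, ← mul_assoc, ← Real.exp_add]
      ring_nf
    · intro h
      rw [h, ← mul_assoc, ← mul_assoc, ← Real.exp_add]
      ring_nf
  have keylog : ∀ (φ : ℝ) (I : Fin n),
      (Real.exp (-(2*φ)) * ‖π I‖^2 - Real.exp (2*φ) * (|k| * ‖q I‖^2) = 0) ↔
      φ = (1/4) * Real.log (‖π I‖^2 / (|k| * ‖q I‖^2)) := by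
    intro φ I
    rw [key]
    constructor
    · intro h
      have h2 : Real.exp (4*φ) = ‖π I‖^2 / (|k| * ‖q I‖^2) := by
        rw [h, mul_div_assoc, div_self (ne_of_gt (hB I)), mul_one]
      have := congrArg Real.log h2
      rw [Real.log_exp] at this
      linarith
    · intro h
      have h4 : 4 * φ = Real.log (‖π I‖^2 / (|k| * ‖q I‖^2)) := by rw [h]; ring
      rw [h4, Real.exp_log (div_pos (hA I) (hB I)),
        div_mul_cancel₀ _ (ne_of_gt (hB I))]
  have uniq : ∀ φ : Fin n → ℝ, (∑ I, φ I = 0) →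
      (∀ I, Real.exp (-(2 * φ I)) * ‖π I‖ ^ 2
            - Real.exp (2 * φ I) * (|k| * ‖q I‖ ^ 2) = 0) →
      φ = fun I => (1 / 4) * Real.log (‖π I‖ ^ 2 / (|k| * ‖q I‖ ^ 2)) := by
    intro φ _ hc
    funext I
    exact (keylog (φ I) I).mp (hc I)
  refine ⟨⟨?_, ?_⟩, uniq⟩
  · rintro ⟨φ, hsum, hc⟩
    have hφ := uniq φ hsum hc
    have hprod : (∏ I, ‖π I‖ ^ 2) = ∏ I, Real.exp (4 * φ I) * (|k| * ‖q I‖ ^ 2) :=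
      Finset.prod_congr rfl fun I _ => (key (φ I) I).mp (hc I)
    rw [hprod, Finset.prod_mul_distrib, ← Real.exp_sum]
    have : ∑ I, 4 * φ I = 0 := by
      rw [← Finset.mul_sum, hsum, mul_zero]
    rw [this, Real.exp_zero, one_mul, Finset.prod_mul_distrib,
      Finset.prod_const, Finset.card_univ, Fintype.card_fin]
  · intro hglob
    refine ⟨fun I => (1 / 4) * Real.log (‖π I‖ ^ 2 / (|k| * ‖q I‖ ^ 2)), ?_, ?_⟩
    · have hlog : ∀ I : Fin n, Real.log (‖π I‖ ^ 2 / (|k| * ‖q I‖ ^ 2))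
          = Real.log (‖π I‖ ^ 2) - Real.log (|k| * ‖q I‖ ^ 2) := fun I =>
        Real.log_div (ne_of_gt (hA I)) (ne_of_gt (hB I))
      simp only [hlog, ← Finset.mul_sum, Finset.sum_sub_distrib]
      have h1 : ∑ I, Real.log (‖π I‖ ^ 2) = Real.log (∏ I, ‖π I‖ ^ 2) :=
        (Real.log_prod fun I _ => ne_of_gt (hA I)).symm
      have h2 : ∑ I, Real.log (|k| * ‖q I‖ ^ 2) = Real.log (∏ I, (|k| * ‖q I‖ ^ 2)) :=
        (Real.log_prod fun I _ => ne_of_gt (hB I)).symm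
      have h3 : (∏ I, (|k| * ‖q I‖ ^ 2)) = |k| ^ n * ∏ I, ‖q I‖ ^ 2 := by
        rw [Finset.prod_mul_distrib, Finset.prod_const, Finset.card_univ, Fintype.card_fin]
      rw [h1, h2, h3, ← hglob, sub_self, mul_zero]
    · intro I
      exact (keylog _ I).mpr rfl
end

section
/- Let n be a positive integer, V : ℝⁿ → ℝ continuously differentiable, E ∈ ℝ, and let q : ℝ → ℝⁿ be twice differentiable with kinetic energy T(λ) = (1/2)‖q′(λ)‖², and suppose T(λ) > 0 and E − V(q(λ)) > 0 for all λ. Assume q satisfies the Euler–Lagrange equation of Jacobi's action: (d/dλ)[ √((E − V(q(λ)))/T(λ)) · q′(λ) ] = − √( T(λ)/(E − V(q(λ))) ) · ∇V(q(λ)) for all λ. Let τ : ℝ → ℝ be differentiable with τ′(λ) = √( T(λ)/(E − V(q(λ))) ) (the ephemeris time), and let s : ℝ → ℝ be a differentiable right inverse of τ (τ(s(t)) = t for all t). Then the reparametrized curve Q = q ∘ s is twice differentiable and satisfies Newton's second law Q″(t) = −∇V(Q(t)) for all t. -/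
/-- Jacobi's geodesic principle yields Newton's second law in ephemeris time: if `q`
is twice differentiable with `T = (1/2)‖q′‖² > 0` and `E − V(q) > 0`, satisfies the
Euler–Lagrange equation of Jacobi's action
`(d/dλ)[√((E−V)/T) q′] = −√(T/(E−V)) ∇V(q)`, and `τ` is the ephemeris time
(`τ′ = √(T/(E−V))`) with differentiable right inverse `s`, then `Q = q ∘ s` is twice
differentiable and satisfies `Q″(t) = −∇V(Q(t))`. -/
theorem jacobi_geodesic_gives_newton
    (n : ℕ) (hn : 0 < n)
    (V : EuclideanSpace ℝ (Fin n) → ℝ) (hV : ContDiff ℝ 1 V)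
    (E : ℝ)
    (q : ℝ → EuclideanSpace ℝ (Fin n))
    (hq : Differentiable ℝ q) (hq' : Differentiable ℝ (deriv q))
    (T : ℝ → ℝ) (hT : T = fun l => (1 / 2) * ‖deriv q l‖ ^ 2)
    (hTpos : ∀ l, 0 < T l)
    (hEV : ∀ l, 0 < E - V (q l))
    (hEL : ∀ l : ℝ,
      deriv (fun x => Real.sqrt ((E - V (q x)) / T x) • deriv q x) l
        = -(Real.sqrt (T l / (E - V (q l))) • gradient V (q l)))
    (τ : ℝ → ℝ) (hτ : Differentiable ℝ τ)
    (hτ' : ∀ l, deriv τ l = Real.sqrt (T l / (E - V (q l))))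
    (s : ℝ → ℝ) (hs : Differentiable ℝ s)
    (hrinv : ∀ t, τ (s t) = t) :
    Differentiable ℝ (q ∘ s) ∧ Differentiable ℝ (deriv (q ∘ s)) ∧
      ∀ t : ℝ, deriv (deriv (q ∘ s)) t = -gradient V ((q ∘ s) t) := by
  have hVdiff : Differentiable ℝ V := hV.differentiable one_ne_zero
  -- T is differentiable
  have hTdiff : Differentiable ℝ T := by
    rw [hT]
    have h := Differentiable.inner (𝕜 := ℝ) hq' hq'
    have he : (fun l => ‖deriv q l‖ ^ 2) = fun l => inner (𝕜 := ℝ) (deriv q l) (deriv q l) :=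
      funext fun l => (real_inner_self_eq_norm_sq _).symm
    exact (he ▸ h).const_mul _
  -- key cancellation
  have hkey : ∀ l, Real.sqrt ((E - V (q l)) / T l) * Real.sqrt (T l / (E - V (q l))) = 1 := by
    intro l
    rw [← Real.sqrt_mul (div_pos (hEV l) (hTpos l)).le]
    have : (E - V (q l)) / T l * (T l / (E - V (q l))) = 1 := by
      rw [div_mul_div_comm, mul_comm (T l)]
      exact div_self (mul_ne_zero (hEV l).ne' (hTpos l).ne')
    rw [this, Real.sqrt_one]
  -- f := sqrt((E-V∘q)/T) is differentiable
  have hfdiff : Differentiable ℝ (fun l => Real.sqrt ((E - V (q l)) / T l)) := by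
    intro l
    have hd : DifferentiableAt ℝ (fun l => (E - V (q l)) / T l) l :=
      (((differentiable_const E).sub (hVdiff.comp hq)) l).div (hTdiff l) (hTpos l).ne'
    exact hd.sqrt (div_pos (hEV l) (hTpos l)).ne'
  have hwdiff : Differentiable ℝ (fun l => Real.sqrt ((E - V (q l)) / T l) • deriv q l) :=
    hfdiff.smul hq'
  have hwHas : ∀ l, HasDerivAt (fun x => Real.sqrt ((E - V (q x)) / T x) • deriv q x)
      (-(Real.sqrt (T l / (E - V (q l))) • gradient V (q l))) l := by
    intro l
    have h := (hwdiff l).hasDerivAt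
    rwa [hEL l] at h
  -- derivative of s
  have hsHas : ∀ t, HasDerivAt s (Real.sqrt ((E - V (q (s t))) / T (s t))) t := by
    intro t
    have h1 : HasDerivAt (τ ∘ s) (deriv τ (s t) * deriv s t) t :=
      ((hτ (s t)).hasDerivAt).comp t (hs t).hasDerivAt
    have h2 : (τ ∘ s) = fun x => x := funext hrinv
    rw [h2] at h1
    have h3 : deriv τ (s t) * deriv s t = 1 := by
      have := h1.deriv
      simpa using this.symm
    rw [hτ' (s t)] at h3
    have hne : Real.sqrt (T (s t) / (E - V (q (s t)))) ≠ 0 :=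
      (Real.sqrt_pos.mpr (div_pos (hTpos (s t)) (hEV (s t)))).ne'
    have h4 : deriv s t = Real.sqrt ((E - V (q (s t))) / T (s t)) :=
      mul_left_cancel₀ hne (by rw [h3, mul_comm]; exact (hkey (s t)).symm)
    exact h4 ▸ (hs t).hasDerivAt
  -- first derivative of Q = q ∘ s
  have hQ'Has : ∀ t, HasDerivAt (q ∘ s)
      (Real.sqrt ((E - V (q (s t))) / T (s t)) • deriv q (s t)) t := by
    intro t
    exact HasDerivAt.scomp t (hq (s t)).hasDerivAt (hsHas t)
  have hderivQ : deriv (q ∘ s) =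
      (fun l => Real.sqrt ((E - V (q l)) / T l) • deriv q l) ∘ s :=
    funext fun t => (hQ'Has t).deriv
  refine ⟨fun t => (hQ'Has t).differentiableAt, ?_, ?_⟩
  · rw [hderivQ]
    exact hwdiff.comp hs
  · intro t
    rw [hderivQ]
    have h := HasDerivAt.scomp t (hwHas (s t)) (hsHas t)
    rw [h.deriv]
    rw [smul_neg, smul_smul, hkey (s t), one_smul]
    simp [Function.comp]
end

section
/- Let d and N be positive integers and, on the phase space (Fin N → ℝ^d) × (Fin N → ℝ^d) of positions q and momenta p, define the conformal constraints D_I(q,p) = ⟪q_I, p_I⟫ − ⟨⟪q, p⟫⟩, where ⟨x⟩ = (1/N)Σ_J x_J and ⟪q,p⟫ : Fin N → ℝ is J ↦ ⟪q_J, p_J⟫. Then: (i) the constraints are Abelian and first class, {D_I, D_J} = 0 for all I, J; and (ii) for any θ : Fin N → ℝ, the smeared constraint D(θ) = Σ_J θ_J D_J generates mean-free local scalings: {q_I^a, D(θ)} = (θ_I − ⟨θ⟩) q_I^a and {p_I^a, D(θ)} = −(θ_I − ⟨θ⟩) p_I^a for every particle I and component a. -/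
open BigOperators

/-- The canonical Poisson bracket on the phase space of `N` particles in `ℝ^d`:
`{f,g} = Σ_{I,a} ∂f/∂q_I^a ∂g/∂p_I^a − ∂f/∂p_I^a ∂g/∂q_I^a`. -/
noncomputable def poissonBracketP (d N : ℕ)
    (f g : (Fin N → Fin d → ℝ) × (Fin N → Fin d → ℝ) → ℝ) :
    (Fin N → Fin d → ℝ) × (Fin N → Fin d → ℝ) → ℝ :=
  fun x => ∑ I : Fin N, ∑ a : Fin d,
    (fderiv ℝ f x (Pi.single I (Pi.single a 1), 0)
        * fderiv ℝ g x (0, Pi.single I (Pi.single a 1))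
      - fderiv ℝ f x (0, Pi.single I (Pi.single a 1))
        * fderiv ℝ g x (Pi.single I (Pi.single a 1), 0))

/-- The conformal constraint of particle `I`:
`D_I(q,p) = ⟪q_I, p_I⟫ − ⟨⟪q,p⟫⟩`, with `⟨x⟩ = (1/N) Σ_J x_J`. -/
noncomputable def confConstraint (d N : ℕ) (I : Fin N) :
    (Fin N → Fin d → ℝ) × (Fin N → Fin d → ℝ) → ℝ :=
  fun x => (∑ a, x.1 I a * x.2 I a)
    - (1 / (N : ℝ)) * ∑ J, ∑ a, x.1 J a * x.2 J a

namespace ConfAux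

variable (d N : ℕ)

abbrev E := (Fin N → Fin d → ℝ) × (Fin N → Fin d → ℝ)

noncomputable def Q (J : Fin N) (b : Fin d) : E d N →L[ℝ] ℝ :=
  ((ContinuousLinearMap.proj b : (Fin d → ℝ) →L[ℝ] ℝ).comp
    (ContinuousLinearMap.proj J : (Fin N → Fin d → ℝ) →L[ℝ] (Fin d → ℝ))).comp
    (ContinuousLinearMap.fst ℝ (Fin N → Fin d → ℝ) (Fin N → Fin d → ℝ))

noncomputable def P (J : Fin N) (b : Fin d) : E d N →L[ℝ] ℝ :=
  ((ContinuousLinearMap.proj b : (Fin d → ℝ) →L[ℝ] ℝ).comp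
    (ContinuousLinearMap.proj J : (Fin N → Fin d → ℝ) →L[ℝ] (Fin d → ℝ))).comp
    (ContinuousLinearMap.snd ℝ (Fin N → Fin d → ℝ) (Fin N → Fin d → ℝ))

@[simp] lemma Q_apply (J : Fin N) (b : Fin d) (x : E d N) : Q d N J b x = x.1 J b := rfl
@[simp] lemma P_apply (J : Fin N) (b : Fin d) (x : E d N) : P d N J b x = x.2 J b := rfl

noncomputable def G (J : Fin N) (x : E d N) : E d N →L[ℝ] ℝ :=
  ∑ b, (x.1 J b • P d N J b + x.2 J b • Q d N J b)

lemma hasFDerivAt_g (J : Fin N) (x : E d N) :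
    HasFDerivAt (fun y : E d N => ∑ b, y.1 J b * y.2 J b) (G d N J x) x :=
  HasFDerivAt.fun_sum fun b _ => ((Q d N J b).hasFDerivAt.mul (P d N J b).hasFDerivAt)

noncomputable def DD (I : Fin N) (x : E d N) : E d N →L[ℝ] ℝ :=
  G d N I x - (1 / (N : ℝ)) • ∑ J, G d N J x

lemma hasFDerivAt_conf (I : Fin N) (x : E d N) :
    HasFDerivAt (confConstraint d N I) (DD d N I x) x := by
  unfold confConstraint DD
  exact (hasFDerivAt_g d N I x).sub
    ((HasFDerivAt.fun_sum fun J _ => hasFDerivAt_g d N J x).const_mul _)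

lemma G_apply_q (J : Fin N) (x : E d N) (I : Fin N) (a : Fin d) :
    G d N J x (Pi.single I (Pi.single a 1), 0) = if J = I then x.2 I a else 0 := by
  rcases eq_or_ne J I with h | h <;>
    simp [G, ContinuousLinearMap.sum_apply, h, Pi.single_apply, mul_ite]

lemma G_apply_p (J : Fin N) (x : E d N) (I : Fin N) (a : Fin d) :
    G d N J x (0, Pi.single I (Pi.single a 1)) = if J = I then x.1 I a else 0 := by
  rcases eq_or_ne J I with h | h <;>
    simp [G, ContinuousLinearMap.sum_apply, h, Pi.single_apply, mul_ite]

lemma DD_apply_q (I : Fin N) (x : E d N) (K : Fin N) (a : Fin d) :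
    DD d N I x (Pi.single K (Pi.single a 1), 0)
      = (if I = K then x.2 K a else 0) - (1 / (N : ℝ)) * x.2 K a := by
  simp [DD, ContinuousLinearMap.sum_apply, G_apply_q, Finset.sum_ite_eq]

lemma DD_apply_p (I : Fin N) (x : E d N) (K : Fin N) (a : Fin d) :
    DD d N I x (0, Pi.single K (Pi.single a 1))
      = (if I = K then x.1 K a else 0) - (1 / (N : ℝ)) * x.1 K a := by
  simp [DD, ContinuousLinearMap.sum_apply, G_apply_p, Finset.sum_ite_eq]

end ConfAux

namespace ConfAux

variable (d N : ℕ)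

lemma hasFDerivAt_smeared (θ : Fin N → ℝ) (x : E d N) :
    HasFDerivAt (fun x => ∑ J, θ J * confConstraint d N J x)
      (∑ J, θ J • DD d N J x) x :=
  HasFDerivAt.fun_sum fun J _ => (hasFDerivAt_conf d N J x).const_mul (θ J)

lemma smeared_apply_q (θ : Fin N → ℝ) (x : E d N) (K : Fin N) (a : Fin d) :
    (∑ J, θ J • DD d N J x) (Pi.single K (Pi.single a 1), 0)
      = (θ K - (1 / (N : ℝ)) * ∑ J, θ J) * x.2 K a := by
  simp only [ContinuousLinearMap.sum_apply, ContinuousLinearMap.smul_apply,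
    DD_apply_q, smul_eq_mul, mul_sub, mul_ite, mul_zero, Finset.sum_sub_distrib,
    Finset.sum_ite_eq, Finset.sum_ite_eq', Finset.mem_univ, if_true, ← Finset.sum_mul]
  ring

lemma smeared_apply_p (θ : Fin N → ℝ) (x : E d N) (K : Fin N) (a : Fin d) :
    (∑ J, θ J • DD d N J x) (0, Pi.single K (Pi.single a 1))
      = (θ K - (1 / (N : ℝ)) * ∑ J, θ J) * x.1 K a := by
  simp only [ContinuousLinearMap.sum_apply, ContinuousLinearMap.smul_apply,
    DD_apply_p, smul_eq_mul, mul_sub, mul_ite, mul_zero, Finset.sum_sub_distrib,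
    Finset.sum_ite_eq, Finset.sum_ite_eq', Finset.mem_univ, if_true, ← Finset.sum_mul]
  ring

end ConfAux

/-- The conformal constraints `D_I` are Abelian (first class), and the smeared
constraint `D(θ) = Σ_J θ_J D_J` generates mean-free local scalings of `q` and `p`. -/
theorem conformal_constraints_abelian_and_generate_scalings
    (d N : ℕ) (hd : 0 < d) (hN : 0 < N) :
    (∀ I J : Fin N,
      poissonBracketP d N (confConstraint d N I) (confConstraint d N J) = fun _ => 0)
    ∧ (∀ θ : Fin N → ℝ, ∀ I : Fin N, ∀ a : Fin d,
        (poissonBracketP d N (fun x => x.1 I a)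
            (fun x => ∑ J, θ J * confConstraint d N J x)
          = fun x => (θ I - (1 / (N : ℝ)) * ∑ J, θ J) * x.1 I a)
        ∧ (poissonBracketP d N (fun x => x.2 I a)
            (fun x => ∑ J, θ J * confConstraint d N J x)
          = fun x => -((θ I - (1 / (N : ℝ)) * ∑ J, θ J) * x.2 I a))) := by
  open ConfAux in
  constructor
  · intro I J
    funext x
    unfold poissonBracketP
    simp only [(ConfAux.hasFDerivAt_conf d N I x).fderiv,
      (ConfAux.hasFDerivAt_conf d N J x).fderiv,
      ConfAux.DD_apply_q, ConfAux.DD_apply_p]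
    apply Finset.sum_eq_zero; intro K _
    apply Finset.sum_eq_zero; intro b _
    split_ifs <;> ring
  · intro θ I a
    constructor
    · funext x
      unfold poissonBracketP
      have hq : HasFDerivAt (fun x : ConfAux.E d N => x.1 I a) (ConfAux.Q d N I a) x :=
        (ConfAux.Q d N I a).hasFDerivAt
      simp only [hq.fderiv, (ConfAux.hasFDerivAt_smeared d N θ x).fderiv,
        ConfAux.smeared_apply_q, ConfAux.smeared_apply_p,
        ConfAux.Q_apply, Pi.single_apply, Prod.fst_zero, Pi.zero_apply,
        ite_mul, zero_mul, one_mul, mul_zero, zero_sub, sub_zero, neg_zero]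
      simp [ite_apply, Pi.single_apply, Pi.zero_apply, ite_mul, zero_mul, one_mul,
        Finset.sum_ite_eq, Finset.sum_ite_eq']
    · funext x
      unfold poissonBracketP
      have hp : HasFDerivAt (fun x : ConfAux.E d N => x.2 I a) (ConfAux.P d N I a) x :=
        (ConfAux.P d N I a).hasFDerivAt
      simp only [hp.fderiv, (ConfAux.hasFDerivAt_smeared d N θ x).fderiv,
        ConfAux.smeared_apply_q, ConfAux.smeared_apply_p,
        ConfAux.P_apply, Pi.single_apply, Prod.snd_zero, Pi.zero_apply,
        ite_mul, zero_mul, one_mul, mul_zero, zero_sub, sub_zero, neg_zero]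
      simp [ite_apply, Pi.single_apply, Pi.zero_apply, ite_mul, zero_mul, one_mul,
        Finset.sum_ite_eq, Finset.sum_ite_eq']
end

section
/- Let d and N be positive integers, q, p̄ : Fin N → ℝ^d, π̄ : Fin N → ℝ, and for φ : Fin N → ℝ set φ̂_J = φ_J − ⟨φ⟩ with ⟨φ⟩ = (1/N)Σ_K φ_K. Define the type-II generating function F(φ) = Σ_J e^{φ̂_J} ⟪q_J, p̄_J⟫ + Σ_J φ_J π̄_J. Then for each I, the partial derivative of F with respect to φ_I equals π̄_I + ( ⟪q_I, p_I⟫ − ⟨⟪q, p⟫⟩ ), where p_J := e^{φ̂_J} p̄_J and ⟪q,p⟫ : Fin N → ℝ is J ↦ ⟪q_J, p_J⟫. Consequently, the momentum conjugate to φ_I transforms under the best-matching canonical transformation as π̄_I = π_I^φ − ( ⟪q_I, p_I⟫ − ⟨⟪q, p⟫⟩ ), i.e. the trivial constraint π^φ = 0 is mapped to the conformal constraint π_I^φ − D_I = 0 with D_I = ⟪q_I, p_I⟫ − ⟨⟪q,p⟫⟩. -/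
open RealInnerProductSpace BigOperators

/-- The best-matching canonical transformation for mean-free scalings: for the type-II
generating function `F(φ) = Σ_J e^{φ̂_J} ⟪q_J, p̄_J⟫ + Σ_J φ_J π̄_J` with
`φ̂_J = φ_J − ⟨φ⟩`, the momentum conjugate to `φ_I` is
`∂F/∂φ_I = π̄_I + (⟪q_I, p_I⟫ − ⟨⟪q,p⟫⟩)` where `p_J = e^{φ̂_J} p̄_J`; i.e. the
trivial constraint `π^φ = 0` is mapped to `π^φ_I − D_I = 0` with
`D_I = ⟪q_I, p_I⟫ − ⟨⟪q,p⟫⟩`. -/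
theorem generating_function_produces_conformal_constraint
    (d N : ℕ) (hd : 0 < d) (hN : 0 < N)
    (q pbar : Fin N → EuclideanSpace ℝ (Fin d))
    (πbar : Fin N → ℝ) (φ : Fin N → ℝ)
    (F : (Fin N → ℝ) → ℝ)
    (hF : F = fun ψ =>
      (∑ J, Real.exp (ψ J - (1 / (N : ℝ)) * ∑ K, ψ K) * ⟪q J, pbar J⟫)
        + ∑ J, ψ J * πbar J)
    (p : Fin N → EuclideanSpace ℝ (Fin d))
    (hp : p = fun J => Real.exp (φ J - (1 / (N : ℝ)) * ∑ K, φ K) • pbar J) :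
    ∀ I : Fin N,
      fderiv ℝ F φ (Pi.single I 1)
        = πbar I + (⟪q I, p I⟫ - (1 / (N : ℝ)) * ∑ J, ⟪q J, p J⟫) := by
  intro I
  subst hF hp
  set c : Fin N → ℝ := fun J => ⟪q J, pbar J⟫ with hc
  set pr : Fin N → ((Fin N → ℝ) →L[ℝ] ℝ) :=
    fun J => ContinuousLinearMap.proj J with hpr
  set S : (Fin N → ℝ) →L[ℝ] ℝ := ∑ K, pr K with hS
  set L : Fin N → ((Fin N → ℝ) →L[ℝ] ℝ) :=
    fun J => pr J - (1 / (N : ℝ)) • S with hLdef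
  have hL : ∀ (J : Fin N) (ψ : Fin N → ℝ),
      L J ψ = ψ J - (1 / (N : ℝ)) * ∑ K, ψ K := by
    intro J ψ
    simp [hLdef, hS, hpr, ContinuousLinearMap.sum_apply, smul_eq_mul]
  have hterm : ∀ J : Fin N, HasFDerivAt
      (fun ψ : Fin N → ℝ => Real.exp (ψ J - (1 / (N : ℝ)) * ∑ K, ψ K) * c J)
      ((Real.exp (φ J - (1 / (N : ℝ)) * ∑ K, φ K) * c J) • L J) φ := by
    intro J
    have heq : (fun ψ : Fin N → ℝ => ψ J - (1 / (N : ℝ)) * ∑ K, ψ K) = ⇑(L J) :=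
      funext fun ψ => (hL J ψ).symm
    have h1 : HasFDerivAt (fun ψ : Fin N → ℝ => ψ J - (1 / (N : ℝ)) * ∑ K, ψ K)
        (L J) φ := by rw [heq]; exact (L J).hasFDerivAt
    have h2 := (h1.exp).mul_const (c J)
    have e : (Real.exp (φ J - (1 / (N : ℝ)) * ∑ K, φ K) * c J) • L J
        = c J • Real.exp (φ J - (1 / (N : ℝ)) * ∑ K, φ K) • L J := by
      rw [smul_smul, mul_comm]
    rw [e]; exact h2
  have hlin : ∀ J : Fin N, HasFDerivAt
      (fun ψ : Fin N → ℝ => ψ J * πbar J) ((πbar J) • pr J) φ := by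
    intro J
    exact ((pr J).hasFDerivAt).mul_const (πbar J)
  have hsum1 := HasFDerivAt.fun_sum (fun J (_ : J ∈ Finset.univ) => hterm J)
  have hsum2 := HasFDerivAt.fun_sum (fun J (_ : J ∈ Finset.univ) => hlin J)
  have hFd := hsum1.fun_add hsum2
  rw [hFd.fderiv]
  have hone : (∑ K : Fin N, (Pi.single I (1:ℝ)) K) = 1 := by
    simp [Finset.sum_pi_single']
  have hLval : ∀ J : Fin N, L J (Pi.single I (1:ℝ))
      = (if J = I then (1:ℝ) else 0) - 1 / (N : ℝ) := by
    intro J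
    rw [hL J, hone, Pi.single_apply, mul_one]
  simp only [ContinuousLinearMap.add_apply, ContinuousLinearMap.sum_apply,
    ContinuousLinearMap.coe_smul', Pi.smul_apply, smul_eq_mul]
  have hprval : ∀ J : Fin N, pr J (Pi.single I (1:ℝ))
      = if J = I then (1:ℝ) else 0 := by
    intro J; simp [hpr, Pi.single_apply]
  simp only [hLval, hprval]
  have hinner : ∀ J : Fin N,
      ⟪q J, Real.exp (φ J - (1 / (N : ℝ)) * ∑ K, φ K) • pbar J⟫
        = Real.exp (φ J - (1 / (N : ℝ)) * ∑ K, φ K) * c J := by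
    intro J; rw [real_inner_smul_right]
  simp only [hinner, mul_sub, mul_ite, mul_one, mul_zero,
    Finset.sum_sub_distrib, Finset.sum_ite_eq', Finset.mem_univ, if_true]
  rw [← Finset.sum_mul]
  ring
end
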